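/- Let 𝐀 and 𝐁 be valued σ-structures over finite universes such that for every non-negative finite-valued σ-structure 𝐗, Opt(𝐗,𝐁) ≤ Opt(𝐗,𝐀). Then there exists a fractional homomorphism from 𝐀 to 𝐁, i.e., a probability distribution μ on functions f : A → B with Σ_f μ(f)·R^𝐁(f(a)) ≤ R^𝐀(a) for every symbol R and tuple a. -/

import Mathlib

open Finset BigOperators

variable {σ : Type} [Fintype σ]

/-- The value of an assignment `h : X → A` for a non-negative finite-valued input
structure with weights `wX` and a template valued structure with costs `cA`
(costs live in `EReal`, where `⊤` plays the role of `∞` and `0 * ⊤ = 0`). -/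
noncomputable def VCSPVal (ar : σ → ℕ) {X A : Type} [Fintype X]
    (wX : ∀ R : σ, (Fin (ar R) → X) → ℚ)
    (cA : ∀ R : σ, (Fin (ar R) → A) → EReal) (h : X → A) : EReal :=
  ∑ R : σ, ∑ x : Fin (ar R) → X, ((wX R x : ℝ) : EReal) * cA R (fun i => h (x i))

/-- The optimum value `Opt(𝐗,𝐀)`, the minimum of `Val(𝐗,𝐀,h)` over all maps `h : X → A`. -/
noncomputable def VCSPOpt (ar : σ → ℕ) {X A : Type} [Fintype X]
    (wX : ∀ R : σ, (Fin (ar R) → X) → ℚ)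
    (cA : ∀ R : σ, (Fin (ar R) → A) → EReal) : EReal :=
  ⨅ h : X → A, VCSPVal ar wX cA h

/-- A valued structure takes values in `ℚ ∪ {∞}`: each cost is either a rational or `⊤`. -/
def QInftyValued (ar : σ → ℕ) {A : Type}
    (cA : ∀ R : σ, (Fin (ar R) → A) → EReal) : Prop :=
  ∀ (R : σ) (t : Fin (ar R) → A), (∃ q : ℚ, cA R t = ((q : ℝ) : EReal)) ∨ cA R t = ⊤

/-- A fractional homomorphism from the valued structure `cA` to `cB`: a probability
distribution `μ` on functions `A → B` such that for every symbol `R` and tuple `a`,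
`Σ_f μ(f)·R^𝐁(f(a)) ≤ R^𝐀(a)`. -/
def IsFractionalHom (ar : σ → ℕ) {A B : Type} [Fintype A] [DecidableEq A] [Fintype B]
    (cA : ∀ R : σ, (Fin (ar R) → A) → EReal)
    (cB : ∀ R : σ, (Fin (ar R) → B) → EReal)
    (μ : (A → B) → ℚ) : Prop :=
  (∀ f, 0 ≤ μ f) ∧ (∑ f : A → B, μ f = 1) ∧
  ∀ (R : σ) (a : Fin (ar R) → A),
    ∑ f : A → B, ((μ f : ℝ) : EReal) * cB R (fun i => f (a i)) ≤ cA R a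

/-- casting a finite sum of reals to `EReal` -/
lemma ereal_coe_sum {ι : Type*} (s : Finset ι) (f : ι → ℝ) :
    ((∑ i ∈ s, f i : ℝ) : EReal) = ∑ i ∈ s, ((f i : ℝ) : EReal) := by
  induction s using Finset.cons_induction with
  | empty => simp
  | cons a t ha ih => rw [Finset.sum_cons, Finset.sum_cons, EReal.coe_add, ih]

lemma ereal_sum_ne_bot {ι : Type*} (s : Finset ι) (f : ι → EReal)
    (h : ∀ i ∈ s, f i ≠ ⊥) : ∑ i ∈ s, f i ≠ ⊥ := by
  induction s using Finset.cons_induction with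
  | empty => simp
  | cons a t ha ih =>
    rw [Finset.sum_cons, Ne, EReal.add_eq_bot_iff]
    push_neg
    exact ⟨h a (Finset.mem_cons_self a t), ih fun i hi => h i (Finset.mem_cons_of_mem hi)⟩

lemma ereal_sum_eq_top {ι : Type*} (s : Finset ι) (f : ι → EReal)
    (h1 : ∀ i ∈ s, f i ≠ ⊥) [DecidableEq ι] {i₀ : ι} (hi₀ : i₀ ∈ s) (h2 : f i₀ = ⊤) :
    ∑ i ∈ s, f i = ⊤ := by
  rw [← Finset.add_sum_erase s f hi₀, h2]
  exact EReal.top_add_of_ne_bot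
    (ereal_sum_ne_bot _ _ fun i hi => h1 i (Finset.mem_of_mem_erase hi))

lemma ereal_mul_ne_bot (q : ℚ) (hq : 0 ≤ q) (c : EReal) (hc : c ≠ ⊥) :
    (((q : ℝ) : EReal)) * c ≠ ⊥ := by
  induction c using EReal.rec with
  | bot => exact absurd rfl hc
  | coe r => rw [← EReal.coe_mul]; exact EReal.coe_ne_bot _
  | top =>
    rcases eq_or_lt_of_le hq with h | h
    · rw [← h]; simp
    · rw [EReal.mul_top_of_pos (by exact_mod_cast h)]; simp

/-- splitting a finite sum over a predicate, when terms off the predicate vanish -/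
lemma sum_split {ι : Type*} {N : Type*} [Fintype ι] [AddCommMonoid N]
    (P : ι → Prop) [DecidablePred P] (g : ι → N) (h0 : ∀ i, ¬P i → g i = 0) :
    ∑ i, g i = ∑ i : {i // P i}, g i.1 := by
  rw [← Finset.sum_filter_add_sum_filter_not Finset.univ P g,
    Finset.sum_eq_zero (fun i hi => h0 i (Finset.mem_filter.1 hi).2), add_zero]
  exact Finset.sum_subtype _ (by simp) g

/-- Fourier–Motzkin transfer: a rational linear system solvable over `ℝ` is solvable over `ℚ`. -/
lemma fm_rat_of_real : ∀ (n : ℕ) {ι : Type} [Fintype ι] (a : ι → Fin n → ℚ) (b : ι → ℚ),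
    (∃ x : Fin n → ℝ, ∀ i, ∑ j, (a i j : ℝ) * x j ≤ (b i : ℝ)) →
    ∃ x : Fin n → ℚ, ∀ i, ∑ j, a i j * x j ≤ b i := by
  intro n
  induction n with
  | zero =>
    intro ι _ a b ⟨x, hx⟩
    refine ⟨fun j => 0, fun i => ?_⟩
    have := hx i
    simp only [Finset.univ_eq_empty, Finset.sum_empty] at this ⊢
    exact_mod_cast this
  | succ n ih =>
    intro ι _ a b ⟨x, hx⟩
    set c : ι → ℚ := fun i => a i (Fin.last n) with hc
    have key : ∀ i, (∑ j : Fin n, (a i j.castSucc : ℝ) * x j.castSucc)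
        + (c i : ℝ) * x (Fin.last n) ≤ (b i : ℝ) := fun i => by
      have := hx i; rwa [Fin.sum_univ_castSucc] at this
    let ι' := ({i : ι // 0 < c i} × {i : ι // c i < 0}) ⊕ {i : ι // c i = 0}
    let a' : ι' → Fin n → ℚ := fun k j => match k with
      | .inl (p, q) => c p.1 * a q.1 j.castSucc + (-c q.1) * a p.1 j.castSucc
      | .inr z => a z.1 j.castSucc
    let b' : ι' → ℚ := fun k => match k with
      | .inl (p, q) => c p.1 * b q.1 + (-c q.1) * b p.1
      | .inr z => b z.1
    have hreal : ∃ y : Fin n → ℝ, ∀ k, ∑ j, (a' k j : ℝ) * y j ≤ (b' k : ℝ) := by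
      refine ⟨fun j => x j.castSucc, fun k => ?_⟩
      match k with
      | .inl (p, q) =>
        have hp := key p.1
        have hq := key q.1
        have hcp : (0:ℝ) < (c p.1 : ℝ) := by exact_mod_cast p.2
        have hcq : (c q.1 : ℝ) < 0 := by exact_mod_cast q.2
        have expand : ∑ j : Fin n, (a' (.inl (p,q)) j : ℝ) * x j.castSucc
            = (c p.1 : ℝ) * (∑ j : Fin n, (a q.1 j.castSucc : ℝ) * x j.castSucc)
              + (-(c q.1 : ℝ)) * (∑ j : Fin n, (a p.1 j.castSucc : ℝ) * x j.castSucc) := by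
          rw [Finset.mul_sum, Finset.mul_sum, ← Finset.sum_add_distrib]
          refine Finset.sum_congr rfl fun j _ => ?_
          simp only [a']
          push_cast
          ring
        show ∑ j : Fin n, (a' (.inl (p,q)) j : ℝ) * x j.castSucc ≤ (b' (.inl (p,q)) : ℝ)
        rw [expand]
        have h1 := mul_le_mul_of_nonneg_left hq hcp.le
        have h2 := mul_le_mul_of_nonneg_left hp (by linarith : (0:ℝ) ≤ -(c q.1 : ℝ))
        simp only [b']
        push_cast
        nlinarith
      | .inr z =>
        have h0 := key z.1
        have hz : (c z.1 : ℝ) = 0 := by exact_mod_cast z.2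
        show ∑ j : Fin n, (a' (.inr z) j : ℝ) * x j.castSucc ≤ (b' (.inr z) : ℝ)
        simp only [a', b']
        rw [hz] at h0
        linarith
    obtain ⟨y, hy⟩ := ih a' b' hreal
    set T : ι → ℚ := fun i => ∑ j : Fin n, a i j.castSucc * y j with hT
    have combined : ∀ (p : {i : ι // 0 < c i}) (q : {i : ι // c i < 0}),
        c p.1 * T q.1 + (-c q.1) * T p.1 ≤ c p.1 * b q.1 + (-c q.1) * b p.1 := by
      intro p q
      have := hy (.inl (p, q))
      have expand : ∑ j : Fin n, a' (.inl (p,q)) j * y j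
          = c p.1 * T q.1 + (-c q.1) * T p.1 := by
        simp only [hT, Finset.mul_sum, ← Finset.sum_add_distrib]
        refine Finset.sum_congr rfl fun j _ => ?_
        simp only [a']
        ring
      rw [expand] at this
      exact this
    have hz : ∀ (z : {i : ι // c i = 0}), T z.1 ≤ b z.1 := fun z => hy (.inr z)
    set L : ι → ℚ := fun i => (T i - b i) / (-c i) with hL
    set U : ι → ℚ := fun i => (b i - T i) / (c i) with hU
    have hLU : ∀ p q : ι, 0 < c p → c q < 0 → L q ≤ U p := by
      intro p q hp hq
      rw [hL, hU, div_le_div_iff₀ (by linarith) hp]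
      have := combined ⟨p, hp⟩ ⟨q, hq⟩
      nlinarith
    obtain ⟨t, htL, htU⟩ : ∃ t : ℚ, (∀ i, c i < 0 → L i ≤ t) ∧ (∀ i, 0 < c i → t ≤ U i) := by
      set NS : Finset ι := Finset.univ.filter (fun i => c i < 0) with hNS
      set PS : Finset ι := Finset.univ.filter (fun i => 0 < c i) with hPS
      by_cases hN : NS.Nonempty
      · refine ⟨NS.sup' hN L, fun i hi => Finset.le_sup' L (by simp [hNS, hi]), fun p hp => ?_⟩
        exact Finset.sup'_le hN L fun q hq => hLU p q hp (by simpa [hNS] using hq)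
      · have hno : ∀ i, ¬ c i < 0 := by
          intro i hi
          exact hN ⟨i, by simp [hNS, hi]⟩
        by_cases hP : PS.Nonempty
        · exact ⟨PS.inf' hP U, fun i hi => absurd hi (hno i),
            fun p hp => Finset.inf'_le U (by simp [hPS, hp])⟩
        · exact ⟨0, fun i hi => absurd hi (hno i), fun p hp =>
            absurd (⟨p, by simp [hPS, hp]⟩ : PS.Nonempty) hP⟩
    refine ⟨Fin.snoc y t, fun i => ?_⟩
    rw [Fin.sum_univ_castSucc]
    simp only [Fin.snoc_castSucc, Fin.snoc_last]
    show T i + c i * t ≤ b i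
    rcases lt_trichotomy (c i) 0 with h | h | h
    · have := htL i h
      rw [hL, div_le_iff₀ (by linarith : (0:ℚ) < -c i)] at this
      linarith
    · have := hz ⟨i, h⟩
      rw [h]
      linarith
    · have := htU i h
      rw [hU, le_div_iff₀ h] at this
      nlinarith

/-- Transfer lemma with an arbitrary finite variable index type. -/
lemma fm_rat_of_real' {V ι : Type} [Fintype V] [Fintype ι] (a : ι → V → ℚ) (b : ι → ℚ)
    (h : ∃ x : V → ℝ, ∀ i, ∑ v, (a i v : ℝ) * x v ≤ (b i : ℝ)) :
    ∃ x : V → ℚ, ∀ i, ∑ v, a i v * x v ≤ b i := by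
  obtain ⟨x, hx⟩ := h
  set e := Fintype.equivFin V with he
  obtain ⟨y, hy⟩ := fm_rat_of_real (Fintype.card V) (fun i j => a i (e.symm j)) b
    ⟨fun j => x (e.symm j), fun i => by
      rw [Equiv.sum_comp e.symm (fun v => (a i v : ℝ) * x v)]; exact hx i⟩
  refine ⟨fun v => y (e v), fun i => ?_⟩
  have := hy i
  rw [← Equiv.sum_comp e.symm (fun v => a i v * y (e v))] at *
  simpa using this

/-- Farkas-type alternative over `ℚ`. -/
lemma farkas_alt {S J : Type} [Fintype S] [Fintype J] [DecidableEq S] (M : S → J → ℚ) :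
    (∃ μ : S → ℚ, (∀ s, 0 ≤ μ s) ∧ (∑ s, μ s = 1) ∧ ∀ j, ∑ s, μ s * M s j ≤ 0)
    ∨ (∃ w : J → ℚ, (∀ j, 0 < w j) ∧ ∀ s, 0 < ∑ j, w j * M s j) := by
  classical
  cases isEmpty_or_nonempty S with
  | inl hS => exact Or.inr ⟨fun _ => 1, fun _ => one_pos, fun s => hS.elim s⟩
  | inr hS =>
  set Mr : S → J → ℝ := fun s j => (M s j : ℝ) with hMr
  let φL : (S → ℝ) →ₗ[ℝ] (J → ℝ) :=
    { toFun := fun μ j => ∑ s, μ s * Mr s j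
      map_add' := by
        intro μ ν; funext j
        simp only [Pi.add_apply, add_mul, Finset.sum_add_distrib]
      map_smul' := by
        intro r μ; funext j
        simp only [Pi.smul_apply, smul_eq_mul, RingHom.id_apply, Finset.mul_sum, mul_assoc] }
  have hφcont : Continuous φL := by
    apply continuous_pi
    intro j
    exact continuous_finset_sum _ fun s _ => (continuous_apply s).mul continuous_const
  set C : Set (J → ℝ) := φL '' stdSimplex ℝ S with hC
  set D : Set (J → ℝ) := {y | ∀ j, y j ≤ 0} with hD
  by_cases hdis : Disjoint C D
  · right
    have hCconv : Convex ℝ C := (convex_stdSimplex ℝ S).linear_image φL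
    have hCcomp : IsCompact C := (isCompact_stdSimplex ℝ S).image hφcont
    have hDconv : Convex ℝ D := by
      intro y hy z hz p q hp hq hpq j
      have h1 : p * y j ≤ 0 := mul_nonpos_of_nonneg_of_nonpos hp (hy j)
      have h2 : q * z j ≤ 0 := mul_nonpos_of_nonneg_of_nonpos hq (hz j)
      simpa using add_nonpos h1 h2
    have hDclosed : IsClosed D := by
      have : D = ⋂ j, {y : J → ℝ | y j ≤ 0} := by
        ext y; simp [hD, Set.mem_iInter]
      rw [this]
      exact isClosed_iInter fun j => isClosed_le (continuous_apply j) continuous_const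
    obtain ⟨f, u, v, hfC, huv, hfD⟩ :=
      geometric_hahn_banach_compact_closed hCconv hCcomp hDconv hDclosed hdis
    have hv0 : v < 0 := by simpa using hfD 0 (fun j => le_refl 0)
    have hu0 : u < 0 := huv.trans hv0
    set W : J → ℝ := fun j => -f (Pi.single j 1) with hW
    have hWpos : ∀ j, 0 ≤ W j := by
      intro j
      by_contra hneg
      push_neg at hneg
      have hfs : 0 < f (Pi.single j 1) := by simpa [hW, neg_neg] using hneg
      set lam : ℝ := v / f (Pi.single j 1) with hlam
      have hlamneg : lam ≤ 0 := div_nonpos_of_nonpos_of_nonneg hv0.le hfs.le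
      have hmem : (lam • (Pi.single j (1:ℝ) : J → ℝ)) ∈ D := by
        intro j'
        by_cases hj : j' = j
        · subst hj; simp [Pi.single_apply, hlamneg]
        · simp [Pi.single_apply, Ne.symm hj]
      have := hfD _ hmem
      rw [map_smul, smul_eq_mul, hlam, div_mul_cancel₀ _ hfs.ne'] at this
      exact lt_irrefl v this
    have frep : ∀ x : J → ℝ, f x = -∑ j, x j * W j := by
      intro x
      have hx : x = ∑ j : J, (Pi.single j (x j) : J → ℝ) := by
        rw [Finset.univ_sum_single]
      conv_lhs => rw [hx]
      rw [map_sum]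
      rw [← Finset.sum_neg_distrib]
      refine Finset.sum_congr rfl fun j _ => ?_
      have : (Pi.single j (x j) : J → ℝ) = x j • (Pi.single j (1:ℝ) : J → ℝ) := by
        rw [← Pi.single_smul, smul_eq_mul, mul_one]
      rw [this, map_smul, smul_eq_mul, hW]
      ring
    -- rows of M have positive pairing with W, with gap -u
    have hrow : ∀ s : S, -u < ∑ j, Mr s j * W j := by
      intro s
      have hmem : (fun j => Mr s j) ∈ C := by
        refine ⟨(Pi.single s (1:ℝ) : S → ℝ), ⟨fun s' => ?_, by simp⟩, ?_⟩
        · by_cases h : s' = s <;> simp [Pi.single_apply, h]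
        · funext j
          have hφ : φL (Pi.single s (1:ℝ) : S → ℝ) j
              = ∑ s', (Pi.single s (1:ℝ) : S → ℝ) s' * Mr s' j := rfl
          rw [hφ, Finset.sum_eq_single s (fun s' _ hs' => by simp [Pi.single_apply, hs'])
            (fun h => absurd (Finset.mem_univ s) h)]
          simp
      have := hfC _ hmem
      rw [frep] at this
      linarith
  -- rationalize
    set g : ℝ := -u with hg
    have hgpos : 0 < g := by simp [hg]; linarith
    set Bq : ℚ := (∑ s : S, ∑ j : J, |M s j|) + 1 with hBq
    have hBq1 : (1:ℚ) ≤ Bq := by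
      rw [hBq]
      have : 0 ≤ ∑ s : S, ∑ j : J, |M s j| :=
        Finset.sum_nonneg fun s _ => Finset.sum_nonneg fun j _ => abs_nonneg _
      linarith
    set Br : ℝ := (Bq : ℝ) with hBr
    have hBrpos : (0:ℝ) < Br := by rw [hBr]; exact_mod_cast lt_of_lt_of_le one_pos hBq1
    set eps : ℝ := g / Br with heps
    have hepspos : 0 < eps := div_pos hgpos hBrpos
    have hchoice : ∀ j : J, ∃ q : ℚ, W j < (q:ℝ) ∧ (q:ℝ) < W j + eps := by
      intro j
      obtain ⟨q, hq1, hq2⟩ := exists_rat_btwn (by linarith : W j < W j + eps)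
      exact ⟨q, hq1, hq2⟩
    choose w hw1 hw2 using hchoice
    refine ⟨w, fun j => ?_, fun s => ?_⟩
    · have : (0:ℝ) < (w j : ℝ) := lt_of_le_of_lt (hWpos j) (hw1 j)
      exact_mod_cast this
    · have hsplit : ∑ j, (w j : ℝ) * Mr s j
          = (∑ j, Mr s j * W j) + ∑ j, ((w j : ℝ) - W j) * Mr s j := by
        rw [← Finset.sum_add_distrib]
        exact Finset.sum_congr rfl fun j _ => by ring
      have hterm : ∀ j, -(eps * |Mr s j|) ≤ ((w j : ℝ) - W j) * Mr s j := by
        intro j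
        have habs : |((w j : ℝ) - W j) * Mr s j| ≤ eps * |Mr s j| := by
          rw [abs_mul]
          refine mul_le_mul_of_nonneg_right ?_ (abs_nonneg _)
          rw [abs_of_nonneg (by linarith [hw1 j] : (0:ℝ) ≤ (w j : ℝ) - W j)]
          linarith [hw2 j]
        linarith [neg_abs_le (((w j : ℝ) - W j) * Mr s j), abs_nonneg (((w j : ℝ) - W j) * Mr s j)]
      have hsum2 : -(eps * ∑ j, |Mr s j|) ≤ ∑ j, ((w j : ℝ) - W j) * Mr s j := by
        rw [Finset.mul_sum, ← Finset.sum_neg_distrib]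
        exact Finset.sum_le_sum fun j _ => hterm j
      have hrowabs : ∑ j, |Mr s j| ≤ Br - 1 := by
        have h1 : (∑ j : J, |M s j|) ≤ Bq - 1 := by
          rw [hBq]
          have := Finset.single_le_sum
            (f := fun s => ∑ j : J, |M s j|)
            (fun s' _ => Finset.sum_nonneg fun j _ => abs_nonneg _) (Finset.mem_univ s)
          linarith
        calc ∑ j, |Mr s j| = ((∑ j : J, |M s j| : ℚ) : ℝ) := by push_cast [hMr]; rfl
          _ ≤ ((Bq - 1 : ℚ):ℝ) := by exact_mod_cast h1
          _ = Br - 1 := by push_cast [hBr]; ring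
      have hfinal : (0:ℝ) < ∑ j, (w j : ℝ) * Mr s j := by
        have hepsB : eps * Br = g := div_mul_cancel₀ g hBrpos.ne'
        have : eps * (Br - 1) < g := by nlinarith
        have h5 : -(eps * ∑ j, |Mr s j|) ≥ -(eps * (Br - 1)) := by
          have := mul_le_mul_of_nonneg_left hrowabs hepspos.le
          linarith
        rw [hsplit]
        have := hrow s
        linarith
      have : (0:ℝ) < ((∑ j, w j * M s j : ℚ) : ℝ) := by
        rw [Rat.cast_sum]
        convert hfinal using 2 with j
        push_cast [hMr]
        ring
      exact_mod_cast this
  · -- not disjoint: primal case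
    left
    rw [Set.not_disjoint_iff] at hdis
    obtain ⟨z, ⟨μ, hμ, rfl⟩, hzD⟩ := hdis
    -- the rational system
    let ι : Type := (S ⊕ J) ⊕ Bool
    let aSys : ι → S → ℚ := fun k s => match k with
      | .inl (.inl s₀) => if s = s₀ then (-1) else 0
      | .inl (.inr j) => M s j
      | .inr true => 1
      | .inr false => -1
    let bSys : ι → ℚ := fun k => match k with
      | .inl (.inl _) => 0
      | .inl (.inr _) => 0
      | .inr true => 1
      | .inr false => -1
    have hfeas : ∃ x : S → ℝ, ∀ k, ∑ s, (aSys k s : ℝ) * x s ≤ (bSys k : ℝ) := by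
      refine ⟨μ, fun k => ?_⟩
      match k with
      | .inl (.inl s₀) =>
        show ∑ s, ((if s = s₀ then (-1:ℚ) else 0 : ℚ) : ℝ) * μ s ≤ ((0:ℚ):ℝ)
        rw [Finset.sum_eq_single s₀
          (fun s' _ hs' => by simp [hs'])
          (fun h => absurd (Finset.mem_univ s₀) h)]
        simp [hμ.1 s₀]
      | .inl (.inr j) =>
        have := hzD j
        show ∑ s, ((M s j : ℚ) : ℝ) * μ s ≤ ((0:ℚ):ℝ)
        have heq : ∑ s, ((M s j : ℚ) : ℝ) * μ s = φL μ j := by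
          refine Finset.sum_congr rfl fun s _ => ?_
          simp [hMr, mul_comm]
        rw [heq]
        simpa using this
      | .inr true =>
        show ∑ s, ((1:ℚ):ℝ) * μ s ≤ ((1:ℚ):ℝ)
        simp [hμ.2]
      | .inr false =>
        show ∑ s, ((-1:ℚ):ℝ) * μ s ≤ ((-1:ℚ):ℝ)
        simp [Finset.sum_neg_distrib, hμ.2]
    obtain ⟨ν, hν⟩ := fm_rat_of_real' aSys bSys hfeas
    refine ⟨ν, fun s => ?_, ?_, fun j => ?_⟩
    · have := hν (.inl (.inl s))
      rw [Finset.sum_eq_single s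
        (fun s' _ hs' => by simp [aSys, hs'])
        (fun h => absurd (Finset.mem_univ s) h)] at this
      simp only [aSys, bSys] at this
      norm_num at this
      linarith
    · have h1 := hν (.inr true)
      have h2 := hν (.inr false)
      simp only [aSys, bSys, one_mul, neg_one_mul, Finset.sum_neg_distrib] at h1 h2
      linarith
    · have := hν (.inl (.inr j))
      simp only [aSys, bSys] at this
      calc ∑ s, ν s * M s j = ∑ s, M s j * ν s := Finset.sum_congr rfl fun s _ => mul_comm _ _
        _ ≤ 0 := this

lemma VCSPVal_sigma (ar : σ → ℕ) {X A : Type} [Fintype X]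
    (wX : ∀ R : σ, (Fin (ar R) → X) → ℚ)
    (cA : ∀ R : σ, (Fin (ar R) → A) → EReal) (h : X → A) :
    VCSPVal ar wX cA h
      = ∑ p : Σ R : σ, (Fin (ar R) → X),
          ((wX p.1 p.2 : ℝ) : EReal) * cA p.1 (fun i => h (p.2 i)) := by
  rw [VCSPVal, ← Finset.univ_sigma_univ, Finset.sum_sigma]

/-- If `Opt(𝐗,𝐁) ≤ Opt(𝐗,𝐀)` for every non-negative finite-valued input structure `𝐗`,
then there is a fractional homomorphism from `𝐀` to `𝐁`. -/
theorem stmt8 (ar : σ → ℕ) {A B : Type} [Fintype A] [DecidableEq A] [Fintype B]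
    [Nonempty A] [Nonempty B]
    (cA : ∀ R : σ, (Fin (ar R) → A) → EReal)
    (cB : ∀ R : σ, (Fin (ar R) → B) → EReal)
    (hA : QInftyValued ar cA) (hB : QInftyValued ar cB)
    (hopt : ∀ (X : Type) [Fintype X] (wX : ∀ R : σ, (Fin (ar R) → X) → ℚ),
      (∀ R x, 0 ≤ wX R x) → VCSPOpt ar wX cB ≤ VCSPOpt ar wX cA) :
    ∃ μ : (A → B) → ℚ, IsFractionalHom ar cA cB μ := by
  classical
  set P : Type := Σ R : σ, (Fin (ar R) → A) with hP
  set JP : P → Prop := fun p => cA p.1 p.2 ≠ ⊤ with hJP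
  choose qA hqA using fun j : {p : P // JP p} => (hA j.1.1 j.1.2).resolve_right j.2
  set SP : (A → B) → Prop := fun f => ∀ j : {p : P // JP p}, cB j.1.1 (fun i => f (j.1.2 i)) ≠ ⊤
    with hSP
  choose qB hqB using fun (s : {f // SP f}) (j : {p : P // JP p}) =>
    (hB j.1.1 (fun i => s.1 (j.1.2 i))).resolve_right (s.2 j)
  rcases farkas_alt (fun s j => qB s j - qA j) with ⟨μ₀, hμ0, hμ1, hμ2⟩ | ⟨w, hw, hwS⟩
  · -- primal: build the fractional homomorphism
    refine ⟨fun f => if h : SP f then μ₀ ⟨f, h⟩ else 0, ?_, ?_, ?_⟩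
    · intro f
      by_cases h : SP f
      · simp only [dif_pos h]; exact hμ0 _
      · simp [dif_neg h]
    · rw [sum_split SP _ (fun f hf => dif_neg hf)]
      rw [← hμ1]
      exact Finset.sum_congr rfl fun s _ => by rw [dif_pos s.2]
    · intro R a
      by_cases hRa : JP ⟨R, a⟩
      · set j : {p : P // JP p} := ⟨⟨R, a⟩, hRa⟩ with hj
        have key : ∑ f : A → B,
            (((if h : SP f then μ₀ ⟨f, h⟩ else 0 : ℚ) : ℝ) : EReal) * cB R (fun i => f (a i))
            = (((∑ s : {f // SP f}, μ₀ s * qB s j : ℚ) : ℝ) : EReal) := by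
          rw [sum_split SP
            (fun f => (((if h : SP f then μ₀ ⟨f, h⟩ else 0 : ℚ) : ℝ) : EReal)
              * cB R (fun i => f (a i)))
            (fun f hf => by simp [dif_neg hf])]
          push_cast
          rw [ereal_coe_sum]
          refine Finset.sum_congr rfl fun s _ => ?_
          rw [dif_pos s.2, EReal.coe_mul]
          congr 1
          exact hqB s j
        rw [key]
        have hle : (∑ s : {f // SP f}, μ₀ s * qB s j) ≤ qA j := by
          have hexp : ∑ s : {f // SP f}, μ₀ s * qB s j
              = (∑ s : {f // SP f}, μ₀ s * (qB s j - qA j))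
                + (∑ s : {f // SP f}, μ₀ s) * qA j := by
            rw [Finset.sum_mul, ← Finset.sum_add_distrib]
            exact Finset.sum_congr rfl fun s _ => by ring
          rw [hexp, hμ1]
          have := hμ2 j
          linarith
        have : cA R a = ((qA j : ℝ) : EReal) := hqA j
        rw [this]
        exact_mod_cast hle
      · have hE : cA R a = ⊤ := not_not.mp hRa
        rw [hE]
        exact le_top
  · -- dual: contradiction with hopt
    exfalso
    set wX : ∀ R : σ, (Fin (ar R) → A) → ℚ :=
      fun R x => if h : JP ⟨R, x⟩ then w ⟨⟨R, x⟩, h⟩ else 0 with hwX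
    have hwXnn : ∀ R x, 0 ≤ wX R x := by
      intro R x
      by_cases h : JP ⟨R, x⟩
      · simp only [hwX, dif_pos h]; exact (hw _).le
      · simp [hwX, dif_neg h]
    set VA : ℚ := ∑ j : {p : P // JP p}, w j * qA j with hVA
    have hValA : VCSPVal ar wX cA id = (((VA : ℚ) : ℝ) : EReal) := by
      rw [VCSPVal_sigma]
      rw [sum_split JP
        (fun p => ((wX p.1 p.2 : ℝ) : EReal) * cA p.1 (fun i => id (p.2 i)))
        (fun p hp => by simp [hwX, dif_neg hp])]
      rw [hVA]
      push_cast
      rw [ereal_coe_sum]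
      refine Finset.sum_congr rfl fun j _ => ?_
      rw [EReal.coe_mul]
      have h1 : wX j.1.1 j.1.2 = w j := by
        simp only [hwX]
        rw [dif_pos]
      have h2 : cA j.1.1 (fun i => id (j.1.2 i)) = ((qA j : ℝ) : EReal) := by
        simpa using hqA j
      rw [h1, h2]
    have hOptA : VCSPOpt ar wX cA ≤ (((VA : ℚ) : ℝ) : EReal) := by
      rw [VCSPOpt]
      exact (iInf_le _ id).trans (le_of_eq hValA)
    have hBval : ∀ h : A → B, (((VA : ℚ) : ℝ) : EReal) < VCSPVal ar wX cB h := by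
      intro h
      by_cases hh : SP h
      · have hcomp : VCSPVal ar wX cB h
            = (((∑ j : {p : P // JP p}, w j * qB ⟨h, hh⟩ j : ℚ) : ℝ) : EReal) := by
          rw [VCSPVal_sigma]
          rw [sum_split JP
            (fun p => ((wX p.1 p.2 : ℝ) : EReal) * cB p.1 (fun i => h (p.2 i)))
            (fun p hp => by simp [hwX, dif_neg hp])]
          push_cast
          rw [ereal_coe_sum]
          refine Finset.sum_congr rfl fun j _ => ?_
          rw [EReal.coe_mul]
          have h1 : wX j.1.1 j.1.2 = w j := by
            simp only [hwX]
            rw [dif_pos]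
          rw [h1, hqB ⟨h, hh⟩ j]
        rw [hcomp]
        have : VA < ∑ j : {p : P // JP p}, w j * qB ⟨h, hh⟩ j := by
          have hpos := hwS ⟨h, hh⟩
          have hexp : ∑ j : {p : P // JP p}, w j * qB ⟨h, hh⟩ j
              = VA + ∑ j : {p : P // JP p}, w j * (qB ⟨h, hh⟩ j - qA j) := by
            rw [hVA, ← Finset.sum_add_distrib]
            exact Finset.sum_congr rfl fun j _ => by ring
          rw [hexp]
          linarith
        exact_mod_cast this
      · have hh' : ∃ j : {p : P // JP p}, cB j.1.1 (fun i => h (j.1.2 i)) = ⊤ := by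
          by_contra hcon
          push_neg at hcon
          exact hh hcon
        obtain ⟨j₀, hj₀⟩ := hh'
        have htop : VCSPVal ar wX cB h = ⊤ := by
          rw [VCSPVal_sigma]
          refine ereal_sum_eq_top _ _ ?_ (Finset.mem_univ j₀.1) ?_
          · intro p _
            apply ereal_mul_ne_bot _ (hwXnn p.1 p.2)
            rcases hB p.1 (fun i => h (p.2 i)) with ⟨q, hq⟩ | hq
            · rw [hq]; exact EReal.coe_ne_bot _
            · rw [hq]; exact top_ne_bot
          · show ((wX j₀.1.1 j₀.1.2 : ℝ) : EReal) * cB j₀.1.1 (fun i => h (j₀.1.2 i)) = ⊤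
            have h1 : wX j₀.1.1 j₀.1.2 = w j₀ := by
              simp only [hwX]
              rw [dif_pos]
            rw [h1, hj₀]
            exact EReal.mul_top_of_pos (by exact_mod_cast hw j₀)
        rw [htop]
        exact EReal.coe_lt_top _
    have hlt : (((VA : ℚ) : ℝ) : EReal) < VCSPOpt ar wX cB := by
      rw [VCSPOpt]
      have heq : (⨅ h : A → B, VCSPVal ar wX cB h)
          = Finset.univ.inf (fun h : A → B => VCSPVal ar wX cB h) := by
        rw [Finset.inf_eq_iInf]
        simp
      rw [heq]
      exact (Finset.lt_inf_iff (EReal.coe_lt_top _)).2 fun h _ => hBval h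
    exact absurd (lt_of_lt_of_le hlt ((hopt A wX hwXnn).trans hOptA)) (lt_irrefl _)
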